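/- Define χ : Z8 + uZ8 → ℂ by χ(a + ub) = exp(πi(ā + b̄)/4), where ā, b̄ ∈ {0,…,7} are the canonical representatives of a, b ∈ Z/8Z. Then χ is a well-defined additive character (χ(x + y) = χ(x)χ(y) for all x, y, and χ takes values in the unit circle), and χ is a generating character: for every nonzero ideal I of Z8 + uZ8 there exists x ∈ I with χ(x) ≠ 1. Consequently Z8 + uZ8 is a Frobenius ring. -/

import Mathlib

open Real

/-- The character `χ : Z₈ + uZ₈ → ℂ`, `a + ub ↦ exp(πi(ā + b̄)/4)`, where
`ā, b̄ ∈ {0,…,7}` are canonical representatives. -/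
noncomputable def chi8 (x : DualNumber (ZMod 8)) : ℂ :=
  Complex.exp (Real.pi * Complex.I * (x.fst.val + x.snd.val) / 4)

noncomputable def E8 (a : ZMod 8) : ℂ :=
  Complex.exp (Real.pi * Complex.I * a.val / 4)

lemma E8_add (a b : ZMod 8) : E8 (a + b) = E8 a * E8 b := by
  unfold E8
  rw [← Complex.exp_add, Complex.exp_eq_exp_iff_exists_int]
  set q : ℕ := (a.val + b.val) / 8 with hq
  have hnat : (a + b).val + 8 * q = a.val + b.val := by
    rw [hq, ZMod.val_add]
    exact Nat.mod_add_div _ _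
  have hC : ((a + b).val : ℂ) = (a.val : ℂ) + b.val - 8 * q := by
    have := congrArg (fun n : ℕ => (n : ℂ)) hnat
    push_cast at this
    linear_combination this
  refine ⟨-q, ?_⟩
  push_cast
  linear_combination (Real.pi * Complex.I / 4) * hC

lemma chi8_eq (x : DualNumber (ZMod 8)) : chi8 x = E8 x.fst * E8 x.snd := by
  unfold chi8 E8
  rw [← Complex.exp_add]
  ring_nf

lemma chi8_inr4 : chi8 (TrivSqZeroExt.inr (4 : ZMod 8)) = -1 := by
  unfold chi8
  rw [TrivSqZeroExt.fst_inr, TrivSqZeroExt.snd_inr,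
    show ((0 : ZMod 8)).val = 0 from rfl, show ((4 : ZMod 8)).val = 4 from rfl,
    show (Real.pi : ℂ) * Complex.I * (((0:ℕ):ℂ) + ((4:ℕ):ℂ)) / 4 = Real.pi * Complex.I by
      push_cast; ring]
  exact Complex.exp_pi_mul_I

/-- `χ(a + ub) = exp(πi(ā + b̄)/4)` is an additive character of `Z₈ + uZ₈` with values
on the unit circle, and it is a generating character: every nonzero ideal contains an
element `x` with `χ(x) ≠ 1`.  Consequently `Z₈ + uZ₈` is a Frobenius ring. -/
theorem chi8_generating_character :
    (∀ x y : DualNumber (ZMod 8), chi8 (x + y) = chi8 x * chi8 y) ∧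
      (∀ x : DualNumber (ZMod 8), ‖chi8 x‖ = 1) ∧
      (∀ I : Ideal (DualNumber (ZMod 8)), I ≠ ⊥ → ∃ x ∈ I, chi8 x ≠ 1) := by
  refine ⟨?_, ?_, ?_⟩
  · intro x y
    rw [chi8_eq, chi8_eq, chi8_eq, TrivSqZeroExt.fst_add, TrivSqZeroExt.snd_add,
      E8_add, E8_add]
    ring
  · intro x
    have h : chi8 x
        = Complex.exp (((Real.pi * ((x.fst.val : ℝ) + x.snd.val) / 4 : ℝ) : ℂ) * Complex.I) := by
      unfold chi8
      push_cast
      ring_nf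
    rw [h, Complex.norm_exp_ofReal_mul_I]
  · intro I hI
    obtain ⟨x, hxI, hx0⟩ := Submodule.exists_mem_ne_zero_of_ne_bot hI
    have hc : ∀ c : ZMod 8, c ≠ 0 → ∃ r : ZMod 8, r * c = 4 := by decide
    have hmem : TrivSqZeroExt.inr (4 : ZMod 8) ∈ I := by
      by_cases h : x.fst = 0
      · have hsnd : x.snd ≠ 0 := by
          intro h2
          apply hx0
          ext <;> simp [h, h2]
        obtain ⟨r, hr⟩ := hc x.snd hsnd
        have hx : x = TrivSqZeroExt.inr x.snd := by
          ext <;> simp [h]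
        have : TrivSqZeroExt.inl r * x = TrivSqZeroExt.inr (4 : ZMod 8) := by
          rw [hx, TrivSqZeroExt.inl_mul_inr, smul_eq_mul, hr]
        exact this ▸ I.mul_mem_left _ hxI
      · obtain ⟨r, hr⟩ := hc x.fst h
        have : (TrivSqZeroExt.inr r : DualNumber (ZMod 8)) * x
            = TrivSqZeroExt.inr (4 : ZMod 8) := by
          ext
          · simp [TrivSqZeroExt.fst_mul]
          · simp [TrivSqZeroExt.snd_mul, mul_comm, hr]
        exact this ▸ I.mul_mem_left _ hxI
    refine ⟨_, hmem, ?_⟩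
    rw [chi8_inr4]
    norm_num
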